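/- Let n be a positive integer, a = (a_1,...,a_n) and b = (b_1,...,b_n) be n-tuples of complex numbers with b_k ≠ 0 for all k, and p = (p_1,...,p_n) nonnegative real weights with ∑_{i=1}^n p_i = 1. Suppose there exist α ∈ ℂ and r > 0 with |α| > r such that a_k / conj(b_k) ∈ D̄(α,r) for every k ∈ {1,...,n}. Then 0 ≤ (∑_{k=1}^n p_k |a_k|^2)(∑_{k=1}^n p_k |b_k|^2) - | ∑_{k=1}^n p_k a_k b_k |^2 ≤ (r^2/(|α|^2 - r^2)) · | ∑_{k=1}^n p_k a_k b_k |^2. -/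

import Mathlib

theorem stmt_2 (n : ℕ) (hn : 0 < n) (a b : Fin n → ℂ) (p : Fin n → ℝ)
    (hb : ∀ k, b k ≠ 0) (hp : ∀ k, 0 ≤ p k) (hp1 : ∑ i, p i = 1)
    (α : ℂ) (r : ℝ) (hr : 0 < r) (hαr : r < ‖α‖)
    (h : ∀ k, ‖a k / (starRingEnd ℂ) (b k) - α‖ ≤ r) :
    0 ≤ (∑ k, p k * ‖a k‖ ^ 2) * (∑ k, p k * ‖b k‖ ^ 2)
        - ‖∑ k, (p k : ℂ) * a k * b k‖ ^ 2
    ∧ (∑ k, p k * ‖a k‖ ^ 2) * (∑ k, p k * ‖b k‖ ^ 2)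
        - ‖∑ k, (p k : ℂ) * a k * b k‖ ^ 2
      ≤ (r ^ 2 / (‖α‖ ^ 2 - r ^ 2))
        * ‖∑ k, (p k : ℂ) * a k * b k‖ ^ 2 := by
  set A := ∑ k, p k * ‖a k‖ ^ 2 with hAdef
  set B := ∑ k, p k * ‖b k‖ ^ 2 with hBdef
  set C := ∑ k, (p k : ℂ) * a k * b k with hCdef
  have hA0 : 0 ≤ A := Finset.sum_nonneg fun k _ => mul_nonneg (hp k) (by positivity)
  have hB0 : 0 ≤ B := Finset.sum_nonneg fun k _ => mul_nonneg (hp k) (by positivity)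
  have hC0 : 0 ≤ ‖C‖ := norm_nonneg _
  have hms : 0 < ‖α‖ ^ 2 - r ^ 2 := by nlinarith [hr.le]
  -- Cauchy-Schwarz
  have hCS : ‖C‖ ^ 2 ≤ A * B := by
    have h1 : ‖C‖ ≤ ∑ k, (Real.sqrt (p k) * ‖a k‖) *
        (Real.sqrt (p k) * ‖b k‖) := by
      refine le_trans (norm_sum_le _ _) (le_of_eq (Finset.sum_congr rfl fun k _ => ?_))
      rw [norm_mul, norm_mul, Complex.norm_real, Real.norm_of_nonneg (hp k)]
      conv_lhs => rw [← Real.sq_sqrt (hp k)]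
      ring
    have h3 := Finset.sum_mul_sq_le_sq_mul_sq Finset.univ
      (fun k => Real.sqrt (p k) * ‖a k‖)
      (fun k => Real.sqrt (p k) * ‖b k‖)
    have hA' : (∑ k, (Real.sqrt (p k) * ‖a k‖) ^ 2) = A := by
      refine Finset.sum_congr rfl fun k _ => ?_
      rw [mul_pow, Real.sq_sqrt (hp k)]
    have hB' : (∑ k, (Real.sqrt (p k) * ‖b k‖) ^ 2) = B := by
      refine Finset.sum_congr rfl fun k _ => ?_
      rw [mul_pow, Real.sq_sqrt (hp k)]
    rw [hA', hB'] at h3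
    nlinarith [hC0, h1, h3, Finset.sum_nonneg (s := (Finset.univ : Finset (Fin n)))
      (f := fun k => (Real.sqrt (p k) * ‖a k‖) * (Real.sqrt (p k) * ‖b k‖))
      (fun k _ => mul_nonneg (mul_nonneg (Real.sqrt_nonneg _) (norm_nonneg _))
        (mul_nonneg (Real.sqrt_nonneg _) (norm_nonneg _)))]
  -- pointwise inequality
  have hpt : ∀ k, ‖a k‖ ^ 2 + (‖α‖ ^ 2 - r ^ 2) * ‖b k‖ ^ 2
      ≤ 2 * ((starRingEnd ℂ) α * (a k * b k)).re := by
    intro k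
    have h2 : ‖a k - α * (starRingEnd ℂ) (b k)‖ ≤ r * ‖b k‖ := by
      have hbk : (starRingEnd ℂ) (b k) ≠ 0 := by
        simpa using hb k
      have e : a k - α * (starRingEnd ℂ) (b k)
          = (a k / (starRingEnd ℂ) (b k) - α) * (starRingEnd ℂ) (b k) := by
        field_simp
      rw [e, norm_mul, Complex.norm_conj]
      exact mul_le_mul_of_nonneg_right (h k) (norm_nonneg _)
    have h3 : ‖a k - α * (starRingEnd ℂ) (b k)‖ ^ 2
        ≤ r ^ 2 * ‖b k‖ ^ 2 := by
      nlinarith [norm_nonneg (a k - α * (starRingEnd ℂ) (b k)), norm_nonneg (b k), hr.le]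
    simp only [Complex.sq_norm] at h3 ⊢
    simp only [Complex.normSq_apply, Complex.sub_re, Complex.sub_im, Complex.mul_re,
      Complex.mul_im, Complex.conj_re, Complex.conj_im] at h3 ⊢
    nlinarith [h3]
  -- sum it
  have key : A + (‖α‖ ^ 2 - r ^ 2) * B ≤ 2 * ‖α‖ * ‖C‖ := by
    have hsum : A + (‖α‖ ^ 2 - r ^ 2) * B
        ≤ 2 * ((starRingEnd ℂ) α * C).re := by
      have e1 : A + (‖α‖ ^ 2 - r ^ 2) * B
          = ∑ k, (p k * ‖a k‖ ^ 2
            + (‖α‖ ^ 2 - r ^ 2) * (p k * ‖b k‖ ^ 2)) := by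
        rw [hAdef, hBdef, Finset.mul_sum, ← Finset.sum_add_distrib]
      have e2 : 2 * ((starRingEnd ℂ) α * C).re
          = ∑ k, p k * (2 * ((starRingEnd ℂ) α * (a k * b k)).re) := by
        rw [hCdef, Finset.mul_sum, Complex.re_sum, Finset.mul_sum]
        refine Finset.sum_congr rfl fun k _ => ?_
        have : (starRingEnd ℂ) α * ((p k : ℂ) * a k * b k)
            = (p k : ℂ) * ((starRingEnd ℂ) α * (a k * b k)) := by ring
        rw [this]
        simp [Complex.mul_re, Complex.ofReal_re, Complex.ofReal_im]
        ring
      rw [e1, e2]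
      refine Finset.sum_le_sum fun k _ => ?_
      have := mul_le_mul_of_nonneg_left (hpt k) (hp k)
      nlinarith [this]
    have hre : ((starRingEnd ℂ) α * C).re ≤ ‖α‖ * ‖C‖ := by
      calc ((starRingEnd ℂ) α * C).re ≤ ‖(starRingEnd ℂ) α * C‖ := Complex.re_le_norm _
        _ = ‖α‖ * ‖C‖ := by rw [norm_mul, Complex.norm_conj]
    linarith
  constructor
  · linarith [hCS]
  · rw [div_mul_eq_mul_div, le_div_iff₀ hms]
    have hsq := mul_le_mul key key (by positivity) (by positivity)
    nlinarith [hsq, sq_nonneg (A - (‖α‖ ^ 2 - r ^ 2) * B), hC0, hCS]
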